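/- Let E₁ ⊇ E₂ be finite sets and V ⊆ F^{E₁} a linear subspace. Define V_{E₂} = {x ∈ V : x_i = 0 for all i ∈ E₂}, and for a subspace W and X ⊆ E₁ let r_W(X) = dim span{x_i|_W : i ∈ X}. Then for all X ⊆ E₁ \ E₂: r_{V_{E₂}}(X) = r_V(X ∪ E₂) − r_V(E₂). -/
import Mathlib


/-- The `i`-th coordinate functional of `F^E`, restricted to the subspace `V`. -/
noncomputable def coordFun {F E : Type*} [Field F] (V : Submodule F (E → F)) (i : E) :
    V →ₗ[F] F :=
  (LinearMap.proj i).comp V.subtype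

/-- `r_V(X)`: the dimension of the span of the coordinate functionals `x_i|_V`, `i ∈ X`. -/
noncomputable def varRank {F E : Type*} [Field F] (V : Submodule F (E → F)) (X : Set E) : ℕ :=
  Module.finrank F (Submodule.span F (coordFun V '' X))

set_option synthInstance.maxHeartbeats 1000000 in
lemma varRank_aux {K V₁ V₂ : Type*} [Field K] [AddCommGroup V₁] [Module K V₁]
    [AddCommGroup V₂] [Module K V₂] [FiniteDimensional K V₁]
    (f : V₁ →ₗ[K] V₂) (U Kk : Submodule K V₁) (h : LinearMap.ker f = Kk) (hKU : Kk ≤ U) :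
    Module.finrank K (Submodule.map f U) + Module.finrank K Kk = Module.finrank K U := by
  have h1 := LinearMap.finrank_range_add_finrank_ker (f.comp U.subtype)
  have h2 : LinearMap.range (f.comp U.subtype) = Submodule.map f U := by
    rw [LinearMap.range_comp, Submodule.range_subtype]
  have h3 : LinearMap.ker (f.comp U.subtype) = Submodule.comap U.subtype Kk := by
    rw [LinearMap.ker_comp, h]
  have h4 : Module.finrank K (LinearMap.ker (f.comp U.subtype)) = Module.finrank K Kk := by
    rw [h3]; exact (Submodule.comapSubtypeEquivOfLe hKU).finrank_eq
  rw [h2, h4] at h1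
  exact h1

/-- Let `E₂ ⊆ E₁`, `V ⊆ F^{E₁}` a subspace and `W = V_{E₂} = {x ∈ V : x_i = 0 ∀ i ∈ E₂}`.
Then for all `X ⊆ E₁ \ E₂`: `r_{V_{E₂}}(X) = r_V(X ∪ E₂) − r_V(E₂)`. -/
theorem varRank_zeroOn {F E : Type*} [Field F] [Fintype E] (E₂ : Set E)
    (V W : Submodule F (E → F)) (hW : ∀ x, x ∈ W ↔ x ∈ V ∧ ∀ i ∈ E₂, x i = 0)
    (X : Set E) (hX : X ⊆ E₂ᶜ) :
    varRank W X = varRank V (X ∪ E₂) - varRank V E₂ := by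
  classical
  have hWV : W ≤ V := fun x hx => ((hW x).1 hx).1
  set incl : W →ₗ[F] V := Submodule.inclusion hWV with hincl
  set ρ : Module.Dual F V →ₗ[F] Module.Dual F W := incl.dualMap with hρ
  have hcoord : ∀ i, ρ (coordFun V i) = coordFun W i := fun i => rfl
  set U : Submodule F (Module.Dual F V) := Submodule.span F (coordFun V '' (X ∪ E₂)) with hU
  set K : Submodule F (Module.Dual F V) := Submodule.span F (coordFun V '' E₂) with hK
  have hKU : K ≤ U := Submodule.span_mono (Set.image_mono Set.subset_union_right)
  -- coordinate functionals on W vanish on E₂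
  have hWzero : ∀ i ∈ E₂, coordFun W i = 0 := by
    intro i hi
    ext w
    exact ((hW w.1).1 w.2).2 i hi
  -- range of incl is the dual coannihilator of K
  have hrange : LinearMap.range incl = K.dualCoannihilator := by
    ext v
    simp only [Submodule.mem_dualCoannihilator]
    constructor
    · rintro ⟨w, rfl⟩ f hf
      have : ∀ f ∈ coordFun V '' E₂, f (incl w) = 0 := by
        rintro _ ⟨i, hi, rfl⟩
        exact ((hW w.1).1 w.2).2 i hi
      -- functionals killing (incl w) form a submodule
      have hsub : Submodule.span F (coordFun V '' E₂) ≤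
          LinearMap.ker (LinearMap.applyₗ (incl w)) := by
        rw [Submodule.span_le]
        intro f hf
        exact this f hf
      exact hsub hf
    · intro h
      have hv : (v : E → F) ∈ W := by
        rw [hW]
        refine ⟨v.2, fun i hi => ?_⟩
        exact h (coordFun V i) (Submodule.subset_span ⟨i, hi, rfl⟩)
      exact ⟨⟨(v : E → F), hv⟩, rfl⟩
  -- kernel of ρ is exactly K
  have hker : LinearMap.ker ρ = K := by
    rw [hρ, LinearMap.ker_dualMap_eq_dualAnnihilator_range, hrange,
      Subspace.dualCoannihilator_dualAnnihilator_eq]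
  -- image of U under ρ is the span for W over X
  have hmap : Submodule.map ρ U = Submodule.span F (coordFun W '' X) := by
    have hfun : ⇑ρ ∘ coordFun V = coordFun W := funext hcoord
    rw [hU, Submodule.map_span, ← Set.image_comp, hfun, Set.image_union, Submodule.span_union]
    have hz : Submodule.span F (coordFun W '' E₂) = ⊥ := by
      rw [Submodule.span_eq_bot]
      rintro _ ⟨i, hi, rfl⟩
      exact hWzero i hi
    rw [hz, sup_bot_eq]
  -- rank-nullity for ρ restricted to U
  have h1 := varRank_aux ρ U K hker hKU
  rw [hmap] at h1
  have h2 : varRank W X + varRank V E₂ = varRank V (X ∪ E₂) := h1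
  omega
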